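/- arXiv:2508.11033 — 2 statements merged into one kernel-verified Lean document; each statement's English description precedes it below -/
import Mathlib

section
/- Suppose the pair (b, b_year) of real numbers satisfies the population normal equations Cov(ln D, ln L) = −b·Var(ln D) − b_year·Cov(ln D, Y) and Cov(Y − Y₀, ln L) = −b·Cov(ln D, Y) − b_year·Var(Y), where ln L is generated by the DGP ln L = ln B − β·ln D − β_year·(Y − Y₀) − β·ε with Cov(Y, ε) = 0, and suppose the Gram determinant Var(ln D)·Var(Y) − Cov(ln D, Y)² is nonzero. Then the probability limit of the OLS slope on ln D satisfies b = β·(1 + Var(Y)·Cov(ln D, ε) / (Var(ln D)·Var(Y) − Cov(ln D, Y)²)). -/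
open MeasureTheory ProbabilityTheory

/-- Covariance of two real-valued random variables with respect to a measure `μ`. -/
noncomputable def cov {Ω : Type*} [MeasurableSpace Ω] (μ : Measure Ω) (X Y : Ω → ℝ) : ℝ :=
  ∫ ω, (X ω - ∫ x, X x ∂μ) * (Y ω - ∫ x, Y x ∂μ) ∂μ

private lemma l2_mul_int {Ω : Type*} [MeasurableSpace Ω] {μ : Measure Ω} {f g : Ω → ℝ}
    (hf : MemLp f 2 μ) (hg : MemLp g 2 μ) : Integrable (fun ω => f ω * g ω) μ := by
  have h : MemLp (f • g) 1 μ := hg.smul hf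
  exact memLp_one_iff_integrable.mp h

private lemma cov_self {Ω : Type*} [MeasurableSpace Ω] {μ : Measure Ω} [IsFiniteMeasure μ]
    {X : Ω → ℝ} (hX : MemLp X 2 μ) : cov μ X X = variance X μ := by
  rw [variance_eq_integral hX.aemeasurable]
  simp [cov, pow_two]

private lemma cov_comm {Ω : Type*} [MeasurableSpace Ω] (μ : Measure Ω) (X Y : Ω → ℝ) :
    cov μ X Y = cov μ Y X := by
  simp only [cov, mul_comm]

private lemma cov_shift {Ω : Type*} [MeasurableSpace Ω] (μ : Measure Ω) [IsProbabilityMeasure μ]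
    {Y : Ω → ℝ} (hY : MemLp Y 2 μ) (c : ℝ) (Z : Ω → ℝ) :
    cov μ (fun ω => Y ω - c) Z = cov μ Y Z := by
  have hYi : Integrable Y μ := hY.integrable one_le_two
  have h : ∫ ω, (Y ω - c) ∂μ = (∫ ω, Y ω ∂μ) - c := by
    rw [integral_sub hYi (integrable_const c), integral_const]
    simp
  simp only [cov, h]
  congr 1
  ext ω
  ring

private lemma cov_lin {Ω : Type*} [MeasurableSpace Ω] (μ : Measure Ω) [IsProbabilityMeasure μ]
    (W A B C : Ω → ℝ) (hW : MemLp W 2 μ) (hA : MemLp A 2 μ) (hB : MemLp B 2 μ)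
    (hC : MemLp C 2 μ) (c a b' c' : ℝ) (L : Ω → ℝ)
    (hL : ∀ ω, L ω = c - a * A ω - b' * B ω - c' * C ω) :
    cov μ W L = -a * cov μ W A - b' * cov μ W B - c' * cov μ W C := by
  have hAi : Integrable A μ := hA.integrable one_le_two
  have hBi : Integrable B μ := hB.integrable one_le_two
  have hCi : Integrable C μ := hC.integrable one_le_two
  have hEL : ∫ ω, L ω ∂μ = c - a * (∫ ω, A ω ∂μ) - b' * (∫ ω, B ω ∂μ)
      - c' * (∫ ω, C ω ∂μ) := by
    have i1 : Integrable (fun ω => c - a * A ω) μ := (integrable_const c).sub (hAi.const_mul a)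
    have i2 : Integrable (fun ω => c - a * A ω - b' * B ω) μ := i1.sub (hBi.const_mul b')
    have : ∫ ω, L ω ∂μ = ∫ ω, (c - a * A ω - b' * B ω - c' * C ω) ∂μ :=
      integral_congr_ae (Filter.Eventually.of_forall hL)
    rw [this, integral_sub i2 (hCi.const_mul c'), integral_sub i1 (hBi.const_mul b'),
      integral_sub (integrable_const c) (hAi.const_mul a), integral_const,
      integral_const_mul, integral_const_mul, integral_const_mul]
    simp
  set mW := ∫ ω, W ω ∂μ
  set mA := ∫ ω, A ω ∂μ
  set mB := ∫ ω, B ω ∂μ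
  set mC := ∫ ω, C ω ∂μ
  have hWc : MemLp (fun ω => W ω - mW) 2 μ := hW.sub (memLp_const mW)
  have hAc : MemLp (fun ω => A ω - mA) 2 μ := hA.sub (memLp_const mA)
  have hBc : MemLp (fun ω => B ω - mB) 2 μ := hB.sub (memLp_const mB)
  have hCc : MemLp (fun ω => C ω - mC) 2 μ := hC.sub (memLp_const mC)
  have iWA := l2_mul_int hWc hAc
  have iWB := l2_mul_int hWc hBc
  have iWC := l2_mul_int hWc hCc
  have key : cov μ W L = ∫ ω, ((-a) * ((W ω - mW) * (A ω - mA))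
      + ((-b') * ((W ω - mW) * (B ω - mB)) + (-c') * ((W ω - mW) * (C ω - mC)))) ∂μ := by
    unfold cov
    refine integral_congr_ae (Filter.Eventually.of_forall fun ω => ?_)
    show (W ω - mW) * (L ω - ∫ ω, L ω ∂μ) = _
    rw [hL ω, hEL]
    ring
  have j1 : Integrable (fun ω => (-a) * ((W ω - mW) * (A ω - mA))) μ := iWA.const_mul _
  have j2 : Integrable (fun ω => (-b') * ((W ω - mW) * (B ω - mB))) μ := iWB.const_mul _
  have j3 : Integrable (fun ω => (-c') * ((W ω - mW) * (C ω - mC))) μ := iWC.const_mul _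
  have j23 : Integrable (fun ω => (-b') * ((W ω - mW) * (B ω - mB))
      + (-c') * ((W ω - mW) * (C ω - mC))) μ := j2.add j3
  rw [key, integral_add j1 j23, integral_add j2 j3,
    integral_const_mul, integral_const_mul, integral_const_mul]
  unfold cov
  ring

/-- Probability limit of the OLS slope on `ln D` from the misspecified regression. -/
theorem plim_beta_hat {Ω : Type*} [MeasurableSpace Ω] (μ : Measure Ω) [IsProbabilityMeasure μ]
    (X Y ε : Ω → ℝ) (hX : MemLp X 2 μ) (hY : MemLp Y 2 μ) (hε : MemLp ε 2 μ)
    (β β_year lnB Y₀ : ℝ) (lnL : Ω → ℝ)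
    (hlnL : ∀ ω, lnL ω = lnB - β * X ω - β_year * (Y ω - Y₀) - β * ε ω)
    (hYε : cov μ Y ε = 0) (b b_year : ℝ)
    (h1 : cov μ X lnL = -b * variance X μ - b_year * cov μ X Y)
    (h2 : cov μ (fun ω => Y ω - Y₀) lnL = -b * cov μ X Y - b_year * variance Y μ)
    (hGram : variance X μ * variance Y μ - (cov μ X Y) ^ 2 ≠ 0) :
    b = β * (1 + variance Y μ * cov μ X ε /
      (variance X μ * variance Y μ - (cov μ X Y) ^ 2)) := by
  have hL' : ∀ ω, lnL ω = (lnB + β_year * Y₀) - β * X ω - β_year * Y ω - β * ε ω := by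
    intro ω; rw [hlnL ω]; ring
  have e1 : cov μ X lnL = -β * cov μ X X - β_year * cov μ X Y - β * cov μ X ε :=
    cov_lin μ X X Y ε hX hX hY hε _ _ _ _ lnL hL'
  have e2 : cov μ Y lnL = -β * cov μ Y X - β_year * cov μ Y Y - β * cov μ Y ε :=
    cov_lin μ Y X Y ε hY hX hY hε _ _ _ _ lnL hL'
  rw [cov_shift μ hY Y₀ lnL] at h2
  rw [e1, cov_self hX] at h1
  rw [e2, hYε, cov_comm μ Y X, cov_self hY] at h2
  set VX := variance X μ
  set VY := variance Y μ
  set C := cov μ X Y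
  set Cε := cov μ X ε
  have key : b * (VX * VY - C ^ 2) = β * (VX * VY - C ^ 2) + β * VY * Cε := by
    linear_combination VY * h1 - C * h2
  rw [mul_add, mul_one, ← mul_div_assoc, eq_comm, ← eq_sub_iff_add_eq', div_eq_iff hGram]
  linear_combination (-1 : ℝ) * key
end

section
/- Assume β > 0, β_year > 0, Cov(Y, ε) = 0, Var(Y) > 0, the Gram determinant Var(ln D)·Var(Y) − Cov(ln D, Y)² is positive, and the selection covariance satisfies Cov(ln D, ε) > −Var(ln D − (Cov(ln D, Y)/Var(Y))·Y). Let (b, b_year) satisfy the population normal equations Cov(ln D, ln L) = −b·Var(ln D) − b_year·Cov(ln D, Y) and Cov(Y − Y₀, ln L) = −b·Cov(ln D, Y) − b_year·Var(Y) for ln L generated by the DGP ln L = ln B − β·ln D − β_year·(Y − Y₀) − β·ε. Then the bias of the estimated rate of algorithmic progress admits the representation b_year/b − β_year/β = −(β_year/β + Cov(ln D, Y)/Var(Y)) · Cov(ln D, ε) / (Var(ln D − (Cov(ln D, Y)/Var(Y))·Y) + Cov(ln D, ε)). -/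
open MeasureTheory ProbabilityTheory

section aux
variable {Ω : Type*} [MeasurableSpace Ω] {μ : Measure Ω} [IsProbabilityMeasure μ]

lemma integrable_mul_of_memL2 {f g : Ω → ℝ} (hf : MemLp f 2 μ) (hg : MemLp g 2 μ) :
    Integrable (fun ω => f ω * g ω) μ := by
  have h1 : Integrable (fun ω => ((f ω + g ω) ^ 2 - f ω ^ 2 - g ω ^ 2) / 2) μ :=
    (((hf.add hg).integrable_sq.sub hf.integrable_sq).sub hg.integrable_sq).div_const 2
  convert h1 using 2 with ω
  ring

lemma memL2_center {f : Ω → ℝ} (hf : MemLp f 2 μ) :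
    MemLp (fun ω => f ω - ∫ x, f x ∂μ) 2 μ :=
  hf.sub (memLp_const _)

lemma cov_eq_integral {f g : Ω → ℝ} :
    cov μ f g = ∫ ω, (f ω - ∫ x, f x ∂μ) * (g ω - ∫ x, g x ∂μ) ∂μ := rfl

lemma cov_self_s6 {f : Ω → ℝ} (hf : MemLp f 2 μ) : cov μ f f = variance f μ := by
  rw [variance_eq_integral hf.aemeasurable, cov_eq_integral]
  congr 1 with ω
  simp [sq]

lemma variance_eq_cov {f : Ω → ℝ} (hf : MemLp f 2 μ) : variance f μ = cov μ f f :=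
  (cov_self_s6 hf).symm

lemma cov_comm_s6 (f g : Ω → ℝ) : cov μ f g = cov μ g f := by
  unfold cov; congr 1 with ω; ring

lemma cov_add_right {f g h : Ω → ℝ} (hf : MemLp f 2 μ) (hg : MemLp g 2 μ)
    (hh : MemLp h 2 μ) :
    cov μ f (fun ω => g ω + h ω) = cov μ f g + cov μ f h := by
  have hint : (∫ x, (g x + h x) ∂μ) = (∫ x, g x ∂μ) + ∫ x, h x ∂μ :=
    integral_add (hg.integrable one_le_two) (hh.integrable one_le_two)
  rw [cov_eq_integral, cov_eq_integral, cov_eq_integral,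
    ← integral_add (integrable_mul_of_memL2 (memL2_center hf) (memL2_center hg))
      (integrable_mul_of_memL2 (memL2_center hf) (memL2_center hh))]
  congr 1 with ω
  rw [hint]; ring

lemma cov_const_mul_right {f g : Ω → ℝ} (c : ℝ) :
    cov μ f (fun ω => c * g ω) = c * cov μ f g := by
  have hint : (∫ x, c * g x ∂μ) = c * ∫ x, g x ∂μ := integral_const_mul c g
  rw [cov_eq_integral, cov_eq_integral, ← integral_const_mul]
  congr 1 with ω
  rw [hint]; ring

lemma cov_const_right (f : Ω → ℝ) (c : ℝ) : cov μ f (fun _ => c) = 0 := by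
  rw [cov_eq_integral]
  simp

lemma cov_sub_const_left (f g : Ω → ℝ) (c : ℝ) (hf : MemLp f 2 μ) :
    cov μ (fun ω => f ω - c) g = cov μ f g := by
  have hint : (∫ x, (f x - c) ∂μ) = (∫ x, f x ∂μ) - c := by
    rw [integral_sub (hf.integrable one_le_two) (integrable_const c)]
    simp
  rw [cov_eq_integral, cov_eq_integral]
  congr 1 with ω
  rw [hint]; ring

end aux

/-- Residual-variance representation of the bias of the estimated rate of
algorithmic progress. -/
theorem bias_residual_representation {Ω : Type*} [MeasurableSpace Ω] (μ : Measure Ω) [IsProbabilityMeasure μ]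
    (X Y ε : Ω → ℝ) (hX : MemLp X 2 μ) (hY : MemLp Y 2 μ) (hε : MemLp ε 2 μ)
    (β β_year lnB Y₀ : ℝ) (lnL : Ω → ℝ)
    (hlnL : ∀ ω, lnL ω = lnB - β * X ω - β_year * (Y ω - Y₀) - β * ε ω)
    (hβ : 0 < β) (hβyear : 0 < β_year) (hYε : cov μ Y ε = 0)
    (hVarY : 0 < variance Y μ)
    (hGram : 0 < variance X μ * variance Y μ - (cov μ X Y) ^ 2)
    (hsel : cov μ X ε > -variance (fun ω => X ω - (cov μ X Y / variance Y μ) * Y ω) μ)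
    (b b_year : ℝ)
    (h1 : cov μ X lnL = -b * variance X μ - b_year * cov μ X Y)
    (h2 : cov μ (fun ω => Y ω - Y₀) lnL = -b * cov μ X Y - b_year * variance Y μ) :
    b_year / b - β_year / β =
      -(β_year / β + cov μ X Y / variance Y μ) * cov μ X ε /
        (variance (fun ω => X ω - (cov μ X Y / variance Y μ) * Y ω) μ + cov μ X ε) := by
  set Sxx := variance X μ with hSxx
  set Syy := variance Y μ with hSyy
  set Sxy := cov μ X Y with hSxy
  set Sxε := cov μ X ε with hSxε
  set s := Sxy / Syy with hs
  set V := variance (fun ω => X ω - s * Y ω) μ with hV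
  -- expand cov of lnL against a generic L² variable
  have key : ∀ W : Ω → ℝ, MemLp W 2 μ →
      cov μ W lnL = (-β) * cov μ W X + (-β_year) * cov μ W Y + (-β) * cov μ W ε := by
    intro W hW
    have hform : lnL = fun ω => ((lnB + β_year * Y₀) + (-β) * X ω) +
        (((-β_year) * Y ω) + (-β) * ε ω) := by
      funext ω; rw [hlnL ω]; ring
    rw [hform]
    have hc : MemLp (fun _ : Ω => lnB + β_year * Y₀) 2 μ := memLp_const _
    have h1 : MemLp (fun ω => (lnB + β_year * Y₀) + (-β) * X ω) 2 μ :=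
      hc.add (hX.const_mul _)
    have h2 : MemLp (fun ω => (-β_year) * Y ω + (-β) * ε ω) 2 μ :=
      (hY.const_mul _).add (hε.const_mul _)
    rw [cov_add_right hW h1 h2,
      cov_add_right hW hc (hX.const_mul _),
      cov_add_right hW (hY.const_mul _) (hε.const_mul _),
      cov_const_mul_right, cov_const_mul_right, cov_const_mul_right,
      cov_const_right]
    ring
  -- compute the two normal-equation left sides
  have e1 : cov μ X lnL = (-β) * Sxx + (-β_year) * Sxy + (-β) * Sxε := by
    rw [key X hX, cov_self_s6 hX]
  have e2 : cov μ (fun ω => Y ω - Y₀) lnL = (-β) * Sxy + (-β_year) * Syy := by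
    rw [cov_sub_const_left Y lnL Y₀ hY, key Y hY, cov_self_s6 hY, cov_comm_s6 Y X, hYε]
    ring
  rw [e1] at h1
  rw [e2] at h2
  -- expand V
  have hSyy0 : Syy ≠ 0 := ne_of_gt hVarY
  have hVval : V = Sxx - Sxy ^ 2 / Syy := by
    have hsY : MemLp (fun ω => (-s) * Y ω) 2 μ := hY.const_mul _
    have hXY' : MemLp (fun ω => X ω + (-s) * Y ω) 2 μ := hX.add hsY
    have expand : (fun ω => X ω - s * Y ω) = (fun ω => X ω + (-s) * Y ω) := by
      funext ω; ring
    have c1 : cov μ (fun ω => X ω + (-s) * Y ω) X = Sxx + (-s) * Sxy := by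
      rw [cov_comm_s6, cov_add_right hX hX hsY, cov_const_mul_right, cov_self_s6 hX,
        hSxx, hSxy]
    have c2 : cov μ (fun ω => X ω + (-s) * Y ω) Y = Sxy + (-s) * Syy := by
      rw [cov_comm_s6, cov_add_right hY hX hsY, cov_const_mul_right, cov_self_s6 hY,
        cov_comm_s6 Y X, hSxy, hSyy]
    have main : cov μ (fun ω => X ω + (-s) * Y ω) (fun ω => X ω + (-s) * Y ω)
        = cov μ (fun ω => X ω + (-s) * Y ω) X
          + (-s) * cov μ (fun ω => X ω + (-s) * Y ω) Y := by
      rw [cov_add_right hXY' hX hsY, cov_const_mul_right]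
    rw [hV, expand, variance_eq_cov hXY', main, c1, c2, hs]
    field_simp
    ring
  have hVS : V * Syy = Sxx * Syy - Sxy ^ 2 := by
    rw [hVval]; field_simp
  clear_value Sxx Syy Sxy Sxε s V
  -- positivity facts
  have hVpos : 0 < V := by
    nlinarith [hGram, hVarY, hVS]
  have hVε : 0 < V + Sxε := by linarith [hsel]
  have hβ0 : β ≠ 0 := ne_of_gt hβ
  have hV0 : V ≠ 0 := ne_of_gt hVpos
  have hVε0 : V + Sxε ≠ 0 := ne_of_gt hVε
  -- solve the normal equations
  have hbmb : (b - β) * V * Syy = β * Sxε * Syy := by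
    linear_combination Syy * h1 - Sxy * h2 + (b - β) * hVS
  have hbmb' : (b - β) * V = β * Sxε :=
    mul_right_cancel₀ hSyy0 hbmb
  have hbeq : b = β * (V + Sxε) / V := by
    rw [eq_div_iff hV0]
    linear_combination hbmb'
  have hbyr : (b_year - β_year) * Syy = -(b - β) * Sxy := by
    linear_combination h2
  have h3 : (b_year - β_year) * (Syy * V) = -(β * Sxε) * Sxy := by
    linear_combination V * hbyr - Sxy * hbmb'
  have hby : b_year = β_year - β * Sxε * Sxy / (V * Syy) := by
    have h4 : β * Sxε * Sxy / (V * Syy) = β_year - b_year := by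
      rw [div_eq_iff (mul_ne_zero hV0 hSyy0)]
      linear_combination h3
    linarith
  have hb0 : b ≠ 0 := by
    rw [hbeq]
    positivity
  rw [hbeq, hby, hs]
  field_simp
  ring
end
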